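/- Let Φ^t be an ergodic measurable flow on a metric space X preserving a Borel probability measure μ. Let Σ ⊆ X be a section: for every x ∈ X the time t'(x) = min{t ≥ 0 : Φ^t(x) ∈ Σ} is well defined and finite, and for every x ∈ Σ the return time t(x) = min{t > 0 : Φ^t(x) ∈ Σ} is well defined and finite. Let π(x) = Φ^{t'(x)}(x), let F : Σ → Σ, F(x) = Φ^{t(x)}(x), be the Poincaré map, and let μ_F be the F-invariant probability measure on Σ induced by μ, so that (Σ,F,μ_F) is ergodic and every subset of Σ of full μ_F-measure has π-preimage of full μ-measure. Suppose ∫_Σ t(x) dμ_F(x) < ∞. Let (S_r)_{r>0} be a decreasing family of measurable subsets of Σ with lim_{r→0} μ_F(S_r) = 0. Then there is a set C ⊆ X with μ(C) = 1 such that for every x ∈ C, lim_{r→0} log τ(x,S_r)/(−log r) = lim_{r→0} log τ^Σ(π(x),S_r)/(−log r), in the sense that the corresponding limsups coincide and the corresponding liminfs coincide. -/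

import Mathlib

open MeasureTheory Filter Set Topology

/-- `Φ` is a flow: time `0` is the identity and the group law holds. -/
def IsFlow {X : Type*} (Φ : ℝ → X → X) : Prop :=
  (∀ x, Φ 0 x = x) ∧ ∀ s t x, Φ (s + t) x = Φ s (Φ t x)

/-- Hitting time of a set `A` for the flow `Φ` started at `x`:
`τ(x,A) = inf {t ≥ 0 : Φᵗ x ∈ A}`. -/
noncomputable def hitTime {X : Type*} (Φ : ℝ → X → X) (x : X) (A : Set X) : ℝ :=
  sInf {t : ℝ | 0 ≤ t ∧ Φ t x ∈ A}

/-- Hitting time of a set `S` under iteration of `F`: least `n ≥ 1` with `F^[n] x ∈ S`. -/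
noncomputable def hitTimeN {X : Type*} (F : X → X) (x : X) (S : Set X) : ℕ :=
  sInf {n : ℕ | 1 ≤ n ∧ F^[n] x ∈ S}


section AuxLemmas
set_option linter.unusedSectionVars false

section PartA
variable {l : Filter ℝ} [l.NeBot] {f g : ℝ → ℝ}

omit [l.NeBot] in
lemma aux_cobdd_iff : IsCoboundedUnder (· ≥ ·) l f ↔ BddAbove {a : ℝ | ∀ᶠ r in l, a ≤ f r} := by
  constructor
  · rintro ⟨b, hb⟩
    exact ⟨b, fun a ha => hb a (by rw [eventually_map]; exact ha)⟩
  · rintro ⟨b, hb⟩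
    exact ⟨b, fun a ha => hb (by rw [eventually_map] at ha; exact ha)⟩

omit [l.NeBot] in
lemma aux_cobdd_transfer (hb : IsCoboundedUnder (· ≥ ·) l g)
    (hfg : ∀ᶠ r in l, f r ≤ g r + 1) : IsCoboundedUnder (· ≥ ·) l f := by
  rw [aux_cobdd_iff] at hb ⊢
  obtain ⟨b, hb⟩ := hb
  refine ⟨b + 1, fun a ha => ?_⟩
  have : a - 1 ∈ {a : ℝ | ∀ᶠ r in l, a ≤ g r} := by
    filter_upwards [ha, hfg] with r h1 h2; linarith
  have := hb this
  linarith

omit [l.NeBot] in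
lemma aux_bdd_transfer (hb : IsBoundedUnder (· ≤ ·) l g)
    (hfg : ∀ᶠ r in l, f r ≤ g r + 1) : IsBoundedUnder (· ≤ ·) l f := by
  obtain ⟨a, ha⟩ := hb
  rw [eventually_map] at ha
  exact ⟨a + 1, by rw [eventually_map]; filter_upwards [ha, hfg] with r h1 h2; linarith⟩

lemma aux_limsup_le
    (h : ∀ ε : ℝ, 0 < ε → ∀ᶠ r in l, 0 ≤ f r ∧ 0 ≤ g r ∧ f r ≤ g r + ε ∧ g r ≤ f r + ε) :
    limsup f l ≤ limsup g l := by
  by_cases hb : IsBoundedUnder (· ≤ ·) l g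
  · have cobf : IsCoboundedUnder (· ≤ ·) l f :=
      IsCoboundedUnder.of_frequently_ge (a := 0) ((h 1 one_pos).mono fun r hr => hr.1).frequently
    refine le_of_forall_pos_le_add fun ε hε => ?_
    have h2 : ∀ᶠ r in l, g r < limsup g l + ε / 2 :=
      eventually_lt_of_limsup_lt (lt_add_of_pos_right _ (by positivity)) hb
    apply limsup_le_of_le cobf
    filter_upwards [h (ε/2) (by positivity), h2] with r hr hr2
    calc f r ≤ g r + ε/2 := hr.2.2.1
      _ ≤ limsup g l + ε := by linarith
  · have hbf : ¬ IsBoundedUnder (· ≤ ·) l f := fun hf =>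
      hb (aux_bdd_transfer hf ((h 1 one_pos).mono fun r hr => by linarith [hr.2.2.2]))
    rw [limsup_eq, limsup_eq]
    have e1 : {a | ∀ᶠ r in l, f r ≤ a} = ∅ :=
      eq_empty_of_forall_notMem fun a ha => hbf ⟨a, by rw [eventually_map]; exact ha⟩
    have e2 : {a | ∀ᶠ r in l, g r ≤ a} = ∅ :=
      eq_empty_of_forall_notMem fun a ha => hb ⟨a, by rw [eventually_map]; exact ha⟩
    rw [e1, e2]

omit [l.NeBot] in
lemma aux_liminf_le_dummy : True := trivial
lemma aux_liminf_le
    (h : ∀ ε : ℝ, 0 < ε → ∀ᶠ r in l, 0 ≤ f r ∧ 0 ≤ g r ∧ f r ≤ g r + ε ∧ g r ≤ f r + ε) :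
    liminf f l ≤ liminf g l := by
  by_cases hc : IsCoboundedUnder (· ≥ ·) l g
  · have hbf : IsBoundedUnder (· ≥ ·) l f :=
      ⟨0, by rw [eventually_map]; exact (h 1 one_pos).mono fun r hr => hr.1⟩
    refine le_of_forall_pos_le_add fun ε hε => ?_
    have hfreq : ∃ᶠ r in l, g r < liminf g l + ε / 2 :=
      frequently_lt_of_liminf_lt hc (lt_add_of_pos_right _ (by positivity))
    have hfr : ∃ᶠ r in l, f r ≤ liminf g l + ε :=
      (hfreq.and_eventually (h (ε/2) (by positivity))).mono fun r ⟨h1, h2⟩ => by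
        linarith [h2.2.2.1]
    exact liminf_le_of_frequently_le hfr hbf
  · have hcf : ¬ IsCoboundedUnder (· ≥ ·) l f := fun hf =>
      hc (aux_cobdd_transfer hf ((h 1 one_pos).mono fun r hr => by linarith [hr.2.2.2]))
    rw [liminf_eq, liminf_eq]
    rw [aux_cobdd_iff] at hc hcf
    rw [Real.sSup_of_not_bddAbove hc, Real.sSup_of_not_bddAbove hcf]

lemma aux_limsup_liminf_eq
    (h : ∀ ε : ℝ, 0 < ε → ∀ᶠ r in l, 0 ≤ f r ∧ 0 ≤ g r ∧ f r ≤ g r + ε ∧ g r ≤ f r + ε) :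
    limsup f l = limsup g l ∧ liminf f l = liminf g l := by
  have h' : ∀ ε : ℝ, 0 < ε → ∀ᶠ r in l, 0 ≤ g r ∧ 0 ≤ f r ∧ g r ≤ f r + ε ∧ f r ≤ g r + ε :=
    fun ε hε => (h ε hε).mono fun r hr => ⟨hr.2.1, hr.1, hr.2.2.2, hr.2.2.1⟩
  exact ⟨le_antisymm (aux_limsup_le h) (aux_limsup_le h'),
    le_antisymm (aux_liminf_le h) (aux_liminf_le h')⟩

end PartA

section PartB
variable {X : Type*} [MeasurableSpace X] {ν : Measure X} [IsProbabilityMeasure ν]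
  {T : X → X} {g : X → ℝ}

/-- Auxiliary maximal function for Garsia's proof. -/
noncomputable def maxF (T : X → X) (g : X → ℝ) : ℕ → X → ℝ
  | 0 => fun _ => 0
  | N + 1 => fun y => max 0 (g y + maxF T g N (T y))

lemma maxF_nonneg (N : ℕ) (y : X) : 0 ≤ maxF T g N y := by
  cases N with
  | zero => simp [maxF]
  | succ N => exact le_max_left _ _

lemma maxF_mono (N : ℕ) (y : X) : maxF T g N y ≤ maxF T g (N + 1) y := by
  induction N generalizing y with
  | zero => exact maxF_nonneg 1 y
  | succ N ih =>
      simp only [maxF]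
      exact max_le_max (le_refl 0) (add_le_add (le_refl _) (ih (T y)))

lemma maxF_le (N M : ℕ) (h : N ≤ M) (y : X) : maxF T g N y ≤ maxF T g M y := by
  induction M with
  | zero => simp_all
  | succ M ih =>
      rcases Nat.lt_or_ge N (M+1) with h'|h'
      · exact (ih (by omega)).trans (maxF_mono M y)
      · have : N = M + 1 := by omega
        simp [this]

lemma birkhoffSum_le_maxF (N : ℕ) : ∀ n, 1 ≤ n → n ≤ N → ∀ y : X,
    birkhoffSum T g n y ≤ maxF T g N y := by
  induction N with
  | zero => omega
  | succ N ih =>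
      intro n h1 h2 y
      obtain ⟨m, rfl⟩ : ∃ m, n = m + 1 := ⟨n - 1, by omega⟩
      rw [birkhoffSum_succ']
      rcases Nat.eq_zero_or_pos m with rfl|hm
      · simp only [birkhoffSum_zero, add_zero, maxF]
        exact le_max_of_le_right (by linarith [maxF_nonneg (T := T) (g := g) N (T y)])
      · have := ih m hm (by omega) (T y)
        simp only [maxF]
        exact le_max_of_le_right (by linarith)

lemma maxF_exists_birkhoff (N : ℕ) (y : X) :
    ∃ n, n ≤ N ∧ maxF T g N y = birkhoffSum T g n y := by
  induction N generalizing y with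
  | zero => exact ⟨0, le_refl _, by simp [maxF, birkhoffSum_zero]⟩
  | succ N ih =>
      rcases le_or_gt (maxF T g (N+1) y) 0 with h|h
      · refine ⟨0, by omega, ?_⟩
        rw [birkhoffSum_zero]
        exact le_antisymm h (maxF_nonneg _ _)
      · have hpos : 0 < g y + maxF T g N (T y) := by
          by_contra h'
          push_neg at h'
          simp only [maxF, max_eq_left h'] at h
          exact lt_irrefl _ h
        have heq : maxF T g (N+1) y = g y + maxF T g N (T y) := by
          simp only [maxF]
          exact max_eq_right hpos.le
        obtain ⟨n, hn, hv⟩ := ih (T y)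
        exact ⟨n + 1, by omega, by rw [heq, hv, birkhoffSum_succ']⟩

section MET
variable (hT : MeasurePreserving T ν ν) (hgm : Measurable g) (hgi : Integrable g ν)

lemma maxF_pos_eq {N : ℕ} {y : X} (h : 0 < maxF T g (N+1) y) :
    maxF T g (N+1) y = g y + maxF T g N (T y) := by
  by_contra h'
  have : maxF T g (N+1) y = 0 := by
    simp only [maxF] at h' ⊢
    rcases max_cases 0 (g y + maxF T g N (T y)) with ⟨h1, _⟩|⟨h1, _⟩
    · exact h1
    · exact absurd h1 h'
  rw [this] at h; exact lt_irrefl _ h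

include hT hgm in
lemma maxF_measurable (N : ℕ) : Measurable (maxF T g N) := by
  induction N with
  | zero => exact measurable_const
  | succ N ih => exact measurable_const.max (hgm.add (ih.comp hT.measurable))

include hT hgm hgi in
lemma maxF_integrable (N : ℕ) : Integrable (maxF T g N) ν := by
  induction N with
  | zero => exact (integrable_const 0).congr (by simp [maxF])
  | succ N ih =>
      have : Integrable (fun y => g y + maxF T g N (T y)) ν :=
        hgi.add (hT.integrable_comp (maxF_measurable hT hgm N).aestronglyMeasurable |>.mpr ih)
      have := this.pos_part
      refine this.congr (Eventually.of_forall fun y => ?_)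
      simp only [maxF, max_comm]

include hT hgm in
lemma maxF_integral_comp (N : ℕ) :
    ∫ y, maxF T g N (T y) ∂ν = ∫ y, maxF T g N y ∂ν := by
  have h1 : ∫ y, maxF T g N y ∂(ν.map T) = ∫ y, maxF T g N (T y) ∂ν :=
    integral_map hT.measurable.aemeasurable (maxF_measurable hT hgm N).aestronglyMeasurable
  rw [hT.map_eq] at h1
  exact h1.symm

include hT hgm hgi in
theorem maximal_ergodic :
    0 ≤ ∫ y in {y | ∃ n, 1 ≤ n ∧ 0 < birkhoffSum T g n y}, g y ∂ν := by
  set E := {y | ∃ n, 1 ≤ n ∧ 0 < birkhoffSum T g n y} with hE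
  have hSmeas : ∀ n, Measurable (fun y => birkhoffSum T g n y) := fun n => by
    unfold birkhoffSum
    exact Finset.measurable_sum _ (fun i _ => hgm.comp (hT.measurable.iterate i))
  have hEmeas : MeasurableSet E := by
    rw [hE, setOf_exists]
    refine MeasurableSet.iUnion fun n => ?_
    rcases Nat.eq_zero_or_pos n with rfl|hn
    · simp
    · have : {y | 1 ≤ n ∧ 0 < birkhoffSum T g n y} = {y | 0 < birkhoffSum T g n y} := by
        ext y; exact ⟨fun h => h.2, fun h => ⟨hn, h⟩⟩
      rw [this]
      exact measurableSet_lt measurable_const (hSmeas n)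
  set EN := fun N => {y | 0 < maxF T g N y} with hEN
  have hENmeas : ∀ N, MeasurableSet (EN N) :=
    fun N => measurableSet_lt measurable_const (maxF_measurable hT hgm N)
  -- pointwise Garsia inequality
  have key : ∀ N y, maxF T g (N+1) y - maxF T g N (T y) ≤ (EN (N+1)).indicator g y := by
    intro N y
    by_cases h : y ∈ EN (N+1)
    · rw [indicator_of_mem h, maxF_pos_eq (show 0 < maxF T g (N+1) y from h)]
      ring_nf
      exact le_refl _
    · rw [indicator_of_notMem h]
      have h' : ¬ 0 < maxF T g (N+1) y := h
      push_neg at h'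
      have h0 : maxF T g (N+1) y = 0 := le_antisymm h' (maxF_nonneg _ _)
      rw [h0]
      linarith [maxF_nonneg (T := T) (g := g) N (T y)]
  -- integral inequality
  have hstep : ∀ N, 0 ≤ ∫ y, (EN (N+1)).indicator g y ∂ν := by
    intro N
    have hint1 := maxF_integrable hT hgm hgi (N+1)
    have hint2 : Integrable (fun y => maxF T g N (T y)) ν :=
      (hT.integrable_comp (maxF_measurable hT hgm N).aestronglyMeasurable).mpr
        (maxF_integrable hT hgm hgi N)
    have hindint : Integrable ((EN (N+1)).indicator g) ν := hgi.indicator (hENmeas (N+1))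
    have h1 : ∫ y, (maxF T g (N+1) y - maxF T g N (T y)) ∂ν
        ≤ ∫ y, (EN (N+1)).indicator g y ∂ν :=
      integral_mono (hint1.sub hint2) hindint (fun y => key N y)
    rw [integral_sub hint1 hint2, maxF_integral_comp hT hgm] at h1
    have h3 : ∫ y, maxF T g N y ∂ν ≤ ∫ y, maxF T g (N+1) y ∂ν :=
      integral_mono (maxF_integrable hT hgm hgi N) hint1 (fun y => maxF_mono N y)
    linarith
  -- limit
  have hlim : Tendsto (fun N => ∫ y, (EN N).indicator g y ∂ν) atTop
      (𝓝 (∫ y, E.indicator g y ∂ν)) := by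
    refine tendsto_integral_of_dominated_convergence (fun y => |g y|)
      (fun N => (hgi.indicator (hENmeas N)).aestronglyMeasurable)
      hgi.abs
      (fun N => Eventually.of_forall fun y => ?_)
      (Eventually.of_forall fun y => ?_)
    · calc ‖(EN N).indicator g y‖ ≤ ‖g y‖ := norm_indicator_le_norm_self g y
        _ = |g y| := Real.norm_eq_abs _
    · by_cases hy : y ∈ E
      · rw [indicator_of_mem hy]
        obtain ⟨n, hn1, hn2⟩ := hy
        have : ∀ N ≥ n, (EN N).indicator g y = g y := by
          intro N hN
          refine indicator_of_mem ?_ g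
          show 0 < maxF T g N y
          exact lt_of_lt_of_le hn2 (birkhoffSum_le_maxF N n hn1 hN y)
        exact tendsto_const_nhds.congr' (eventually_atTop.2 ⟨n, fun N hN => (this N hN).symm⟩)
      · have : ∀ N, (EN N).indicator g y = 0 := by
          intro N
          refine indicator_of_notMem (fun hmem => hy ?_) g
          have hmem' : 0 < maxF T g N y := hmem
          obtain ⟨n, hn, hv⟩ := maxF_exists_birkhoff (T := T) (g := g) N y
          rcases Nat.eq_zero_or_pos n with rfl|hn1
          · rw [birkhoffSum_zero] at hv
            exact absurd (hv ▸ hmem') (lt_irrefl 0)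
          · exact ⟨n, hn1, hv ▸ hmem'⟩
        rw [indicator_of_notMem hy]
        simp only [this]
        exact tendsto_const_nhds
  rw [← integral_indicator hEmeas]
  refine ge_of_tendsto hlim ?_
  exact eventually_atTop.2 ⟨1, fun N hN => by
    obtain ⟨M, rfl⟩ : ∃ M, N = M + 1 := ⟨N - 1, by omega⟩
    exact hstep M⟩

end MET

section Cor
variable (hergT : Ergodic T ν)

include hergT in
lemma integral_nonneg_of_invariant (hgm : Measurable g) (hgi : Integrable g ν)
    {D : Set X} (hDmeas : MeasurableSet D) (hDinv : T ⁻¹' D = D)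
    (hD : ∀ y ∈ D, ∃ n, 1 ≤ n ∧ 0 < birkhoffSum T g n y) (hνD : ν D ≠ 0) :
    0 ≤ ∫ y, g y ∂ν := by
  rcases hergT.ae_empty_or_univ hDmeas hDinv with h|h
  · exact absurd ((measure_congr h).trans measure_empty) hνD
  · have hDc : ν Dᶜ = 0 := ae_eq_univ.mp h
    set E := {y | ∃ n, 1 ≤ n ∧ 0 < birkhoffSum T g n y} with hE
    have hEc : ν Eᶜ = 0 := measure_mono_null (fun y hy => fun hyD => hy (hD y hyD)) hDc
    have hrestrict : ν.restrict E = ν := by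
      apply Measure.restrict_eq_self_of_ae_mem
      rw [← compl_compl E] at hEc ⊢
      exact (ae_iff.2 (by simp only [compl_compl] at hEc ⊢; exact hEc))
    have := maximal_ergodic hergT.toMeasurePreserving hgm hgi
    rwa [hrestrict] at this

lemma birkhoffSum_sub_const (ρ : X → ℝ) (c : ℝ) (n : ℕ) (y : X) :
    birkhoffSum T (fun z => ρ z - c) n y = birkhoffSum T ρ n y - n * c := by
  simp [birkhoffSum, Finset.sum_sub_distrib, mul_comm]

include hergT in
lemma birkhoff_upper {ρ : X → ℝ} (hρm : Measurable ρ) (hρ0 : ∀ y, 0 ≤ ρ y)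
    (hρi : Integrable ρ ν) :
    ∀ᵐ y ∂ν, ∃ C : ℕ, ∀ᶠ n in atTop, birkhoffSum T ρ n y ≤ C * n := by
  have hT := hergT.toMeasurePreserving
  have hSmeas : ∀ n, Measurable (fun y => birkhoffSum T ρ n y) := fun n => by
    unfold birkhoffSum
    exact Finset.measurable_sum _ (fun i _ => hρm.comp (hT.measurable.iterate i))
  set D := {y | ∀ C : ℕ, ∀ N : ℕ, ∃ n, N ≤ n ∧ (C:ℝ) * n < birkhoffSum T ρ n y} with hD
  have hDmeas : MeasurableSet D := by
    have : D = ⋂ (C:ℕ), ⋂ (N:ℕ), ⋃ (n:ℕ), ⋃ (_ : N ≤ n),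
        {y | (C:ℝ) * n < birkhoffSum T ρ n y} := by
      ext y; simp [hD]
    rw [this]
    exact MeasurableSet.iInter fun C => MeasurableSet.iInter fun N =>
      MeasurableSet.iUnion fun n => MeasurableSet.iUnion fun _ =>
        measurableSet_lt measurable_const (hSmeas n)
  have hDinv : T ⁻¹' D = D := by
    ext y
    simp only [hD, mem_preimage, mem_setOf_eq]
    constructor
    · intro hTy C N
      obtain ⟨n, hn1, hn2⟩ := hTy (C+1) (max N C)
      refine ⟨n+1, by omega, ?_⟩
      rw [birkhoffSum_succ']
      have h1 : (C:ℝ) * (n+1) ≤ ((C:ℝ)+1) * n := by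
        have : (C:ℕ) ≤ n := le_trans (le_max_right N C) hn1
        have : (C:ℝ) ≤ n := by exact_mod_cast this
        nlinarith
      have h2 : ((C+1:ℕ):ℝ) = (C:ℝ)+1 := by push_cast; ring
      push_cast
      push_cast [h2] at hn2
      nlinarith [hρ0 y]
    · intro hy C N
      obtain ⟨m, hm1, hm2⟩ := hy (C + ⌈ρ y⌉₊) (N+1)
      obtain ⟨n, rfl⟩ : ∃ n, m = n + 1 := ⟨m - 1, by omega⟩
      refine ⟨n, by omega, ?_⟩
      rw [birkhoffSum_succ'] at hm2
      have hceil : ρ y ≤ ⌈ρ y⌉₊ := Nat.le_ceil _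
      have hcast : ((C + ⌈ρ y⌉₊ : ℕ):ℝ) = (C:ℝ) + (⌈ρ y⌉₊:ℝ) := by push_cast; ring
      rw [hcast] at hm2
      push_cast at hm2 ⊢
      nlinarith [hρ0 y, hceil, (show (0:ℝ) ≤ (C:ℝ) by positivity),
        (show (0:ℝ) ≤ (n:ℝ) by positivity), (show (0:ℝ) ≤ (⌈ρ y⌉₊:ℝ) by positivity)]
  by_cases hνD : ν D = 0
  · filter_upwards [measure_eq_zero_iff_ae_notMem.mp hνD] with y hy
    simp only [hD, mem_setOf_eq, not_forall, not_exists, not_and, not_lt] at hy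
    obtain ⟨C, N, hCN⟩ := hy
    exact ⟨C, eventually_atTop.2 ⟨N, fun n hn => hCN n hn⟩⟩
  · exfalso
    set K : ℕ := ⌊∫ y, ρ y ∂ν⌋₊ + 1 with hK
    have h0 := integral_nonneg_of_invariant hergT (g := fun y => ρ y - K)
      (hρm.sub measurable_const) (hρi.sub (integrable_const _)) hDmeas hDinv ?_ hνD
    · rw [integral_sub hρi (integrable_const _), integral_const] at h0
      simp only [probReal_univ, one_smul] at h0
      have := Nat.lt_floor_add_one (∫ y, ρ y ∂ν)
      have hKval : (K:ℝ) = (⌊∫ y, ρ y ∂ν⌋₊:ℝ) + 1 := by rw [hK]; push_cast; ring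
      linarith
    · intro y hy
      obtain ⟨n, hn1, hn2⟩ := hy K 1
      refine ⟨n, hn1, ?_⟩
      rw [birkhoffSum_sub_const]
      linarith

include hergT in
lemma birkhoff_lower_indicator {A : Set X} (hA : MeasurableSet A) (hνA : ν A ≠ 0) :
    ∀ᵐ y ∂ν, ∀ᶠ n in atTop,
      ((ν A).toReal / 4) * n ≤ birkhoffSum T (A.indicator (fun _ => (1:ℝ))) n y := by
  have hT := hergT.toMeasurePreserving
  set a := (ν A).toReal with ha
  have ha0 : 0 < a := ENNReal.toReal_pos hνA (measure_ne_top ν A)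
  have ha1 : a ≤ 1 := by
    rw [ha]
    exact ENNReal.toReal_le_of_le_ofReal zero_le_one (by simpa using prob_le_one (μ := ν) (s := A))
  set ι := A.indicator (fun _ => (1:ℝ)) with hι
  have hι01 : ∀ y, 0 ≤ ι y ∧ ι y ≤ 1 := fun y => by
    rw [hι]; unfold indicator; split <;> norm_num
  have hιm : Measurable ι := measurable_const.indicator hA
  have hιi : Integrable ι ν := (integrable_const 1).indicator hA
  have hιint : ∫ y, ι y ∂ν = a := by
    rw [hι, ha]
    exact integral_indicator_one hA
  have hSmeas : ∀ n, Measurable (fun y => birkhoffSum T ι n y) := fun n => by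
    unfold birkhoffSum
    exact Finset.measurable_sum _ (fun i _ => hιm.comp (hT.measurable.iterate i))
  set D := {y | ∀ M : ℕ, ∀ N : ℕ, ∃ n, N ≤ n ∧ birkhoffSum T ι n y < (a/2) * n - M} with hD
  have hDmeas : MeasurableSet D := by
    have : D = ⋂ (M:ℕ), ⋂ (N:ℕ), ⋃ (n:ℕ), ⋃ (_ : N ≤ n),
        {y | birkhoffSum T ι n y < (a/2) * n - M} := by
      ext y; simp [hD]
    rw [this]
    exact MeasurableSet.iInter fun M => MeasurableSet.iInter fun N =>
      MeasurableSet.iUnion fun n => MeasurableSet.iUnion fun _ =>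
        measurableSet_lt (hSmeas n) measurable_const
  have hDinv : T ⁻¹' D = D := by
    ext y
    simp only [hD, mem_preimage, mem_setOf_eq]
    constructor
    · intro hTy M N
      obtain ⟨n, hn1, hn2⟩ := hTy (M+1) N
      refine ⟨n+1, by omega, ?_⟩
      rw [birkhoffSum_succ']
      have := (hι01 y).2
      push_cast
      push_cast at hn2
      nlinarith [ha0]
    · intro hy M N
      obtain ⟨m, hm1, hm2⟩ := hy (M+1) (N+1)
      obtain ⟨n, rfl⟩ : ∃ n, m = n + 1 := ⟨m - 1, by omega⟩
      refine ⟨n, by omega, ?_⟩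
      rw [birkhoffSum_succ'] at hm2
      have := (hι01 y).1
      push_cast
      push_cast at hm2
      nlinarith
  by_cases hνD : ν D = 0
  · filter_upwards [measure_eq_zero_iff_ae_notMem.mp hνD] with y hy
    simp only [hD, mem_setOf_eq, not_forall, not_exists, not_and, not_lt] at hy
    obtain ⟨M, N, hMN⟩ := hy
    rw [eventually_atTop]
    refine ⟨max N (⌈(4*M)/a⌉₊ + 1), fun n hn => ?_⟩
    have h1 := hMN n (le_trans (le_max_left _ _) hn)
    have h2 : (⌈(4*M)/a⌉₊:ℝ) + 1 ≤ n := by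
      have : ⌈(4*M)/a⌉₊ + 1 ≤ n := le_trans (le_max_right _ _) hn
      exact_mod_cast this
    have h3 : (4*M)/a ≤ ⌈(4*M)/a⌉₊ := Nat.le_ceil _
    have h4 : (4*(M:ℝ))/a < n := by linarith
    have h5 : 4*(M:ℝ) < a * n := by
      rw [div_lt_iff₀ ha0] at h4; linarith
    linarith
  · exfalso
    have h0 := integral_nonneg_of_invariant hergT (g := fun y => a/2 - ι y)
      (measurable_const.sub hιm) ((integrable_const _).sub hιi) hDmeas hDinv ?_ hνD
    · rw [integral_sub (integrable_const _) hιi, integral_const, hιint] at h0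
      simp only [probReal_univ, one_smul] at h0
      linarith
    · intro y hy
      obtain ⟨n, hn1, hn2⟩ := hy 0 1
      refine ⟨n, hn1, ?_⟩
      have : birkhoffSum T (fun z => a/2 - ι z) n y = n * (a/2) - birkhoffSum T ι n y := by
        simp [birkhoffSum, Finset.sum_sub_distrib, mul_comm]
      rw [this]
      push_cast at hn2
      nlinarith

include hergT in
lemma ae_hits {A : Set X} (hA : MeasurableSet A) (hνA : ν A ≠ 0) :
    ∀ᵐ y ∂ν, ∃ n, 1 ≤ n ∧ T^[n] y ∈ A := by
  have ha0 : 0 < (ν A).toReal := ENNReal.toReal_pos hνA (measure_ne_top ν A)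
  filter_upwards [birkhoff_lower_indicator hergT hA hνA] with y hy
  by_contra hcon
  push_neg at hcon
  set ι := A.indicator (fun _ => (1:ℝ)) with hι
  have hsum : ∀ n, 1 ≤ n → birkhoffSum T ι n y ≤ 1 := by
    intro n hn
    induction n with
    | zero => omega
    | succ m ih =>
        rcases Nat.eq_zero_or_pos m with rfl|hm
        · simp [birkhoffSum_one, hι, indicator]
          split <;> norm_num
        · rw [birkhoffSum_succ]
          have : ι (T^[m] y) = 0 := indicator_of_notMem (hcon m hm) _
          rw [this, add_zero]
          exact ih hm
  rw [eventually_atTop] at hy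
  obtain ⟨N, hN⟩ := hy
  set n := max (max N 1) (⌈8 / (ν A).toReal⌉₊ + 1) with hn
  have h1 := hN n (le_trans (le_max_left _ _) (le_max_left _ _))
  have h2 := hsum n (le_trans (le_max_right _ _) (le_max_left _ _))
  have h3 : (⌈8 / (ν A).toReal⌉₊:ℝ) + 1 ≤ n := by
    have : ⌈8 / (ν A).toReal⌉₊ + 1 ≤ n := le_max_right _ _
    exact_mod_cast this
  have h4 : 8 / (ν A).toReal < n := by linarith [Nat.le_ceil (8 / (ν A).toReal)]
  have h5 : 8 < (ν A).toReal * n := by rw [div_lt_iff₀ ha0] at h4; linarith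
  linarith

end Cor
end PartB


section PartE
variable {X : Type*} {Φ : ℝ → X → X} {Sec : Set X} {ret : X → ℝ} {F : X → X}
  (hflow : IsFlow Φ)
  (hret0 : ∀ x ∈ Sec, 0 < ret x)
  (hretmem : ∀ x ∈ Sec, Φ (ret x) x ∈ Sec)
  (hretmin : ∀ x ∈ Sec, ∀ s, 0 < s → Φ s x ∈ Sec → ret x ≤ s)
  (hF : ∀ x ∈ Sec, F x = Φ (ret x) x)

include hretmem hF in
lemma orbit_in_sec {y : X} (hy : y ∈ Sec) : ∀ k, F^[k] y ∈ Sec := by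
  intro k
  induction k with
  | zero => exact hy
  | succ k ih =>
      rw [Function.iterate_succ_apply', hF _ ih]
      exact hretmem _ ih

include hflow hretmem hF in
lemma flow_birkhoff {y : X} (hy : y ∈ Sec) (k : ℕ) :
    Φ (birkhoffSum F ret k y) y = F^[k] y := by
  induction k with
  | zero => rw [birkhoffSum_zero]; exact hflow.1 y
  | succ k ih =>
      rw [birkhoffSum_succ, add_comm, hflow.2, ih, Function.iterate_succ_apply',
        hF _ (orbit_in_sec hretmem hF hy k)]

include hret0 hretmem hF in
lemma birkhoff_strictMono {y : X} (hy : y ∈ Sec) :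
    StrictMono (fun k => birkhoffSum F ret k y) := by
  apply strictMono_nat_of_lt_succ
  intro k
  rw [birkhoffSum_succ]
  linarith [hret0 _ (orbit_in_sec hretmem hF hy k)]

include hflow hret0 hretmem hretmin hF in
lemma sec_time_eq_birkhoff {y : X} (hy : y ∈ Sec) {s : ℝ} (hs : 0 ≤ s)
    (hmem : Φ s y ∈ Sec) {m : ℕ} (hm : s < birkhoffSum F ret m y) :
    ∃ k, k < m ∧ s = birkhoffSum F ret k y := by
  classical
  set B := fun k => birkhoffSum F ret k y with hB
  set k := Nat.findGreatest (fun k => B k ≤ s) m with hkdef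
  have hP0 : B 0 ≤ s := by rw [hB]; simpa [birkhoffSum_zero] using hs
  have hk : B k ≤ s := Nat.findGreatest_spec (P := fun k => B k ≤ s) (Nat.zero_le m) hP0
  have hkm : k ≤ m := Nat.findGreatest_le m
  have hklt : k < m := by
    rcases lt_or_eq_of_le hkm with h|h
    · exact h
    · exfalso; rw [h] at hk; exact absurd hm (not_lt.2 hk)
  have hk1 : ¬ (B (k+1) ≤ s) :=
    Nat.findGreatest_is_greatest (Nat.lt_succ_self k) (by omega)
  push_neg at hk1
  have hBsucc : B (k+1) = B k + ret (F^[k] y) := birkhoffSum_succ F ret k y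
  set d := s - B k with hd
  have hd0 : 0 ≤ d := by linarith
  have hdlt : d < ret (F^[k] y) := by rw [hd]; linarith [hBsucc ▸ hk1]
  have hΦd : Φ d (F^[k] y) ∈ Sec := by
    have : Φ s y = Φ d (Φ (B k) y) := by
      rw [← hflow.2]
      congr 1
      linarith
    rw [this, flow_birkhoff hflow hretmem hF hy k] at hmem
    exact hmem
  rcases eq_or_lt_of_le hd0 with h|h
  · exact ⟨k, hklt, by linarith⟩
  · exfalso
    have := hretmin _ (orbit_in_sec hretmem hF hy k) d h hΦd
    linarith

include hflow hret0 hretmem hretmin hF in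
lemma hitTime_eq_birkhoff {x y : X} {t0 : ℝ} (ht0 : 0 ≤ t0) (hy : Φ t0 x = y)
    (hySec : y ∈ Sec)
    (ht0min : ∀ s, 0 ≤ s → Φ s x ∈ Sec → t0 ≤ s)
    {Sr : Set X} (hSsub : Sr ⊆ Sec) (hyS : y ∉ Sr)
    (hne : ∃ n, 1 ≤ n ∧ F^[n] y ∈ Sr) :
    hitTime Φ x Sr = t0 + birkhoffSum F ret (hitTimeN F y Sr) y := by
  set n := hitTimeN F y Sr with hn
  have hnmem : 1 ≤ n ∧ F^[n] y ∈ Sr := Nat.sInf_mem hne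
  set B := fun k => birkhoffSum F ret k y with hB
  have hBmono := birkhoff_strictMono hret0 hretmem hF hySec
  have hB0 : (0:ℝ) ≤ B n := by
    have : B 0 ≤ B n := hBmono.monotone (Nat.zero_le n)
    simpa [hB, birkhoffSum_zero] using this
  have hmem : t0 + B n ∈ {t : ℝ | 0 ≤ t ∧ Φ t x ∈ Sr} := by
    constructor
    · linarith
    · have : Φ (t0 + B n) x = Φ (B n) y := by
        rw [add_comm, hflow.2, hy]
      rw [this, flow_birkhoff hflow hretmem hF hySec n]
      exact hnmem.2
  have hlb : ∀ t ∈ {t : ℝ | 0 ≤ t ∧ Φ t x ∈ Sr}, t0 + B n ≤ t := by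
    rintro t ⟨ht, htmem⟩
    have htSec : Φ t x ∈ Sec := hSsub htmem
    have ht0t : t0 ≤ t := ht0min t ht htSec
    set s := t - t0 with hs
    have hsy : Φ s y ∈ Sec := by
      rw [hs, ← hy, ← hflow.2]
      have : t - t0 + t0 = t := by ring
      rw [this]
      exact htSec
    by_contra hcon
    push_neg at hcon
    have hslt : s < B n := by rw [hs]; linarith
    obtain ⟨k, hkn, hks⟩ := sec_time_eq_birkhoff hflow hret0 hretmem hretmin hF hySec
      (by rw [hs]; linarith : (0:ℝ) ≤ s) hsy hslt
    have hΦs : Φ s y ∈ Sr := by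
      rw [hs, ← hy, ← hflow.2]
      have : t - t0 + t0 = t := by ring
      rw [this]
      exact htmem
    have hFk : F^[k] y ∈ Sr := by
      rw [← flow_birkhoff hflow hretmem hF hySec k, ← hks]
      exact hΦs
    have hk1 : 1 ≤ k := by
      rcases Nat.eq_zero_or_pos k with rfl|h
      · exact absurd (by simpa using hFk) hyS
      · exact h
    have hnk : n ≤ k := Nat.sInf_le ⟨hk1, hFk⟩
    have h2 : B n ≤ B k := hBmono.monotone hnk
    have h3 : B k = s := hks.symm
    linarith [h2, h3]
  have hbdd : BddBelow {t : ℝ | 0 ≤ t ∧ Φ t x ∈ Sr} := ⟨0, fun t ht => ht.1⟩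
  exact le_antisymm (csInf_le hbdd hmem) (le_csInf ⟨_, hmem⟩ hlb)

include hflow hret0 hretmem hretmin hF in
lemma hitTime_empty {x y : X} {t0 : ℝ} (ht0 : 0 ≤ t0) (hy : Φ t0 x = y)
    (hySec : y ∈ Sec)
    (ht0min : ∀ s, 0 ≤ s → Φ s x ∈ Sec → t0 ≤ s)
    {Sr : Set X} (hSsub : Sr ⊆ Sec)
    (hBtop : ∀ s : ℝ, ∃ m, s < birkhoffSum F ret m y)
    (hnone : ∀ k, F^[k] y ∉ Sr) :
    hitTime Φ x Sr = 0 ∧ hitTimeN F y Sr = 0 := by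
  constructor
  · have : {t : ℝ | 0 ≤ t ∧ Φ t x ∈ Sr} = ∅ := by
      apply eq_empty_of_forall_notMem
      rintro t ⟨ht, htmem⟩
      have htSec : Φ t x ∈ Sec := hSsub htmem
      have ht0t : t0 ≤ t := ht0min t ht htSec
      set s := t - t0 with hs
      have heq : Φ s y = Φ t x := by
        rw [hs, ← hy, ← hflow.2]
        have : t - t0 + t0 = t := by ring
        rw [this]
      obtain ⟨m, hm⟩ := hBtop s
      obtain ⟨k, _, hks⟩ := sec_time_eq_birkhoff hflow hret0 hretmem hretmin hF hySec
        (by rw [hs]; linarith : (0:ℝ) ≤ s) (heq ▸ htSec) hm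
      apply hnone k
      rw [← flow_birkhoff hflow hretmem hF hySec k, ← hks, heq]
      exact htmem
    rw [hitTime, this, Real.sInf_empty]
  · have : {n : ℕ | 1 ≤ n ∧ F^[n] y ∈ Sr} = ∅ :=
      eq_empty_of_forall_notMem fun n ⟨_, hmem⟩ => hnone n hmem
    rw [hitTimeN, this, Nat.sInf_empty]

end PartE

end AuxLemmas
/-- For an ergodic measure preserving flow with a Poincaré section `Σ` whose return time
is `μ_F`-integrable, and a decreasing family of targets `S_r ⊆ Σ` with `μ_F(S_r) → 0`,
there is a full measure set of points `x` at which the hitting-time scaling exponent of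
the flow equals the one of the Poincaré map at `π(x)` (both for `limsup` and `liminf`). -/
theorem hitting_time_flow_vs_section
    {X : Type*} [MetricSpace X] [MeasurableSpace X] [BorelSpace X]
    (Φ : ℝ → X → X) (μ : Measure X) [IsProbabilityMeasure μ]
    (hflow : IsFlow Φ) (hmeas : ∀ t, Measurable (Φ t))
    (hpres : ∀ t, MeasurePreserving (Φ t) μ μ)
    (herg : ∀ s : Set X, MeasurableSet s → (∀ t, Φ t ⁻¹' s = s) → μ s = 0 ∨ μ s = 1)
    (Sec : Set X)
    -- `t'` is the first nonnegative hitting time of the section, defined for every `x`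
    (t' : X → ℝ) (ht'0 : ∀ x, 0 ≤ t' x) (ht'mem : ∀ x, Φ (t' x) x ∈ Sec)
    (ht'min : ∀ x, ∀ s, 0 ≤ s → Φ s x ∈ Sec → t' x ≤ s)
    -- `ret` is the first strictly positive return time of points of the section
    (ret : X → ℝ) (hret0 : ∀ x ∈ Sec, 0 < ret x)
    (hretmem : ∀ x ∈ Sec, Φ (ret x) x ∈ Sec)
    (hretmin : ∀ x ∈ Sec, ∀ s, 0 < s → Φ s x ∈ Sec → ret x ≤ s)
    -- the Poincaré map and the induced invariant ergodic measure on the section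
    (F : X → X) (hF : ∀ x ∈ Sec, F x = Φ (ret x) x)
    (μF : Measure X) [IsProbabilityMeasure μF] (hμFsec : μF Sec = 1)
    (hergF : Ergodic F μF)
    (hπfull : ∀ A : Set X, A ⊆ Sec → μF A = 1 → μ ((fun x => Φ (t' x) x) ⁻¹' A) = 1)
    (hint : Integrable ret μF)
    (S : ℝ → Set X) (hSsec : ∀ r, S r ⊆ Sec) (hSmeas : ∀ r, MeasurableSet (S r))
    (hSmono : ∀ r₁ r₂ : ℝ, r₁ ≤ r₂ → S r₁ ⊆ S r₂)
    (hS0 : Tendsto (fun r => μF (S r)) (𝓝[>] (0:ℝ)) (𝓝 0)) :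
    ∃ C : Set X, μ C = 1 ∧ ∀ x ∈ C,
      (limsup (fun r => Real.log (hitTime Φ x (S r)) / (-Real.log r)) (𝓝[>] (0:ℝ)) =
        limsup (fun r => Real.log ((hitTimeN F (Φ (t' x) x) (S r) : ℝ)) / (-Real.log r))
          (𝓝[>] (0:ℝ))) ∧
      (liminf (fun r => Real.log (hitTime Φ x (S r)) / (-Real.log r)) (𝓝[>] (0:ℝ)) =
        liminf (fun r => Real.log ((hitTimeN F (Φ (t' x) x) (S r) : ℝ)) / (-Real.log r))
          (𝓝[>] (0:ℝ))) := by
  classical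
  -- measurable nonnegative version of the return time
  obtain ⟨ρ₁, hρ₁m, hρ₁ae⟩ : ∃ ρ₁, Measurable ρ₁ ∧ ret =ᵐ[μF] ρ₁ :=
    ⟨hint.aemeasurable.mk ret, hint.aemeasurable.measurable_mk, hint.aemeasurable.ae_eq_mk⟩
  set ρ := fun y => max (ρ₁ y) 0 with hρdef
  have hρm : Measurable ρ := hρ₁m.max measurable_const
  have hρ0 : ∀ y, 0 ≤ ρ y := fun y => le_max_right _ _
  have hρi : Integrable ρ μF := (hint.congr hρ₁ae).pos_part
  have hF_mp : MeasurePreserving F μF μF := hergF.toMeasurePreserving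
  have hFm : Measurable F := hF_mp.measurable
  -- a measurable null set outside of which ρ = ret
  obtain ⟨N₁, hN₁sub, hN₁m, hN₁0⟩ :=
    exists_measurable_superset_of_null (ae_iff.mp hρ₁ae)
  have hpos1 : μF {y | 0 < ρ₁ y} = 1 := by
    have hsub : Sec ⊆ {y | 0 < ρ₁ y} ∪ N₁ := by
      intro y hy
      by_cases hN : y ∈ N₁
      · exact Or.inr hN
      · left
        have h1 : ¬ ¬ ret y = ρ₁ y := fun h => hN (hN₁sub h)
        push_neg at h1
        show 0 < ρ₁ y
        rw [← h1]
        exact hret0 y hy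
    have h1 : (1:ENNReal) ≤ μF {y | 0 < ρ₁ y} := by
      calc (1:ENNReal) = μF Sec := hμFsec.symm
        _ ≤ μF ({y | 0 < ρ₁ y} ∪ N₁) := measure_mono hsub
        _ ≤ μF {y | 0 < ρ₁ y} + μF N₁ := measure_union_le _ _
        _ = μF {y | 0 < ρ₁ y} := by rw [hN₁0, add_zero]
    exact le_antisymm prob_le_one h1
  have hneg0 : μF {y | ρ₁ y ≤ 0} = 0 := by
    have hcompl : {y | ρ₁ y ≤ 0} = {y | 0 < ρ₁ y}ᶜ := by
      ext y; simp [not_lt]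
    rw [hcompl, measure_compl (measurableSet_lt measurable_const hρ₁m) (measure_ne_top _ _),
      hpos1, measure_univ, tsub_self]
  set N₂ := N₁ ∪ {y | ρ₁ y ≤ 0} with hN₂def
  have hN₂m : MeasurableSet N₂ := hN₁m.union (measurableSet_le hρ₁m measurable_const)
  have hN₂0 : μF N₂ = 0 := le_antisymm
    (le_trans (measure_union_le _ _) (by rw [hN₁0, hneg0, add_zero])) zero_le
  have hN₂prop : ∀ y ∉ N₂, ρ y = ret y := by
    intro y hy
    have h1 : ¬ ¬ ret y = ρ₁ y := fun h => hy (Or.inl (hN₁sub h))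
    push_neg at h1
    have h2 : 0 < ρ₁ y := by
      by_contra h
      exact hy (Or.inr (by simpa using not_lt.mp h))
    rw [hρdef]
    simp only
    rw [max_eq_left h2.le, h1]
  -- choose the level c with positive measure
  have hexc : ∃ m : ℕ, μF {y | 1/((m:ℝ)+1) ≤ ρ y} ≠ 0 := by
    by_contra h
    push_neg at h
    have hsub : {y | 0 < ρ₁ y} ⊆ ⋃ m : ℕ, {y | 1/((m:ℝ)+1) ≤ ρ y} := by
      intro y hy
      have hρy : 0 < ρ y := lt_of_lt_of_le hy (le_max_left _ _)
      obtain ⟨m, hm⟩ := exists_nat_one_div_lt hρy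
      exact mem_iUnion.2 ⟨m, hm.le⟩
    have : μF {y | 0 < ρ₁ y} = 0 :=
      measure_mono_null hsub (measure_iUnion_null fun m => h m)
    rw [hpos1] at this
    exact one_ne_zero this
  obtain ⟨mc, hmc⟩ := hexc
  set c := 1/((mc:ℝ)+1) with hcdef
  have hc0 : 0 < c := by positivity
  set A := {y | c ≤ ρ y} with hAdef
  have hAm : MeasurableSet A := measurableSet_le measurable_const hρm
  set ia := (μF A).toReal with hiadef
  have hia0 : 0 < ia := ENNReal.toReal_pos hmc (measure_ne_top _ _)
  -- the three core a.e. facts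
  have horb_eq : ∀ᵐ y ∂μF, ∀ k : ℕ, ρ (F^[k] y) = ret (F^[k] y) := by
    rw [ae_all_iff]
    intro k
    have hnull : μF ((F^[k]) ⁻¹' N₂) = 0 := by
      rw [(hF_mp.iterate k).measure_preimage hN₂m.nullMeasurableSet]
      exact hN₂0
    filter_upwards [measure_eq_zero_iff_ae_notMem.mp hnull] with y hy
    exact hN₂prop _ hy
  have hup : ∀ᵐ y ∂μF, ∃ C : ℕ, ∀ᶠ n in atTop, birkhoffSum F ρ n y ≤ C * n :=
    birkhoff_upper hergF hρm hρ0 hρi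
  have hlow : ∀ᵐ y ∂μF, ∀ᶠ n in atTop,
      (ia/4) * n ≤ birkhoffSum F (A.indicator (fun _ => (1:ℝ))) n y :=
    birkhoff_lower_indicator hergF hAm hmc
  -- avoidance of a null target along the orbit
  have havoid : ∀ (V : Set X), MeasurableSet V → μF V = 0 →
      ∀ᵐ y ∂μF, ∀ k : ℕ, F^[k] y ∉ V := by
    intro V hVm hV0
    rw [ae_all_iff]
    intro k
    have hnull : μF ((F^[k]) ⁻¹' V) = 0 := by
      rw [(hF_mp.iterate k).measure_preimage hVm.nullMeasurableSet]
      exact hV0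
    exact measure_eq_zero_iff_ae_notMem.mp hnull
  
  -- package an a.e. statement into a full-measure subset of the section
  have key : ∀ (P : X → Prop), (∀ᵐ y ∂μF, P y) →
      ∃ G : Set X, G ⊆ Sec ∧ μF G = 1 ∧ ∀ y ∈ G, P y := by
    intro P hP
    obtain ⟨Nb, hNbsub, hNbm, hNb0⟩ := exists_measurable_superset_of_null (ae_iff.mp hP)
    refine ⟨Sec ∩ Nbᶜ, inter_subset_left, ?_, ?_⟩
    · have h1 : μF Sec ≤ μF (Sec ∩ Nbᶜ) + μF (Sec \ Nbᶜ) := measure_le_inter_add_diff _ _ _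
      have h2 : μF (Sec \ Nbᶜ) = 0 :=
        measure_mono_null (fun y hy => by simpa using hy.2) hNb0
      rw [h2, add_zero, hμFsec] at h1
      exact le_antisymm prob_le_one h1
    · rintro y ⟨hySec, hyN⟩
      by_contra h
      exact hyN (hNbsub h)
  -- pointwise consequences of the core facts
  have hBfacts : ∀ y, (∀ k : ℕ, ρ (F^[k] y) = ret (F^[k] y)) →
      (∃ C : ℕ, ∀ᶠ n in atTop, birkhoffSum F ρ n y ≤ C * n) →
      (∀ᶠ n in atTop, (ia/4) * n ≤ birkhoffSum F (A.indicator fun _ => (1:ℝ)) n y) →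
      ∃ c' C' : ℝ, 0 < c' ∧ c' ≤ C' ∧
        ∀ᶠ n in atTop, c' * n ≤ birkhoffSum F ret n y ∧ birkhoffSum F ret n y ≤ C' * n := by
    intro y h1 h2 h3
    obtain ⟨C, hC⟩ := h2
    have hBeq : ∀ n, birkhoffSum F ret n y = birkhoffSum F ρ n y := by
      intro n
      unfold birkhoffSum
      exact Finset.sum_congr rfl fun k _ => (h1 k).symm
    have hlower : ∀ n : ℕ, c * birkhoffSum F (A.indicator fun _ => (1:ℝ)) n y
        ≤ birkhoffSum F ρ n y := by
      intro n
      unfold birkhoffSum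
      rw [Finset.mul_sum]
      refine Finset.sum_le_sum fun k _ => ?_
      by_cases hk : F^[k] y ∈ A
      · rw [indicator_of_mem hk]
        have hk' : c ≤ ρ (F^[k] y) := hk
        simpa using hk'
      · rw [indicator_of_notMem hk]
        simpa using hρ0 (F^[k] y)
    set c' := c * (ia/4) with hc'
    have hc'0 : 0 < c' := by positivity
    have hev : ∀ᶠ n in atTop,
        c' * n ≤ birkhoffSum F ret n y ∧ birkhoffSum F ret n y ≤ (C:ℝ) * n := by
      filter_upwards [hC, h3] with n hn1 hn2
      constructor
      · rw [hBeq]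
        calc c' * n = c * ((ia/4) * n) := by rw [hc']; ring
          _ ≤ c * birkhoffSum F (A.indicator fun _ => (1:ℝ)) n y := by
              exact mul_le_mul_of_nonneg_left hn2 hc0.le
          _ ≤ birkhoffSum F ρ n y := hlower n
      · rw [hBeq]; exact hn1
    refine ⟨c', max (C:ℝ) c', hc'0, le_max_right _ _, ?_⟩
    filter_upwards [hev] with n hn
    refine ⟨hn.1, hn.2.trans ?_⟩
    exact mul_le_mul_of_nonneg_right (le_max_left _ _) (Nat.cast_nonneg n)
  have hBtopgen : ∀ (y : X) (c' : ℝ), 0 < c' →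
      (∀ᶠ n in atTop, c' * n ≤ birkhoffSum F ret n y) →
      ∀ s : ℝ, ∃ m, s < birkhoffSum F ret m y := by
    intro y c' hc' hev s
    rw [eventually_atTop] at hev
    obtain ⟨N₀, hN₀⟩ := hev
    obtain ⟨m₀, hm₀⟩ := exists_nat_gt (max (N₀:ℝ) (s / c'))
    have hm₀N : N₀ ≤ m₀ := by
      have := (le_max_left (N₀:ℝ) (s/c')).trans hm₀.le
      exact_mod_cast this
    refine ⟨m₀, lt_of_lt_of_le ?_ (hN₀ m₀ hm₀N)⟩
    have h2 : s / c' < m₀ := (le_max_right _ _).trans_lt hm₀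
    rw [div_lt_iff₀ hc'] at h2
    linarith
  
  by_cases hzero : ∃ r₀, 0 < r₀ ∧ μF (S r₀) = 0
  -- Case I : the targets are eventually null
  · obtain ⟨r₀, hr₀pos, hr₀null⟩ := hzero
    obtain ⟨G, hGsec, hG1, hGP⟩ :=
      key _ ((horb_eq.and (hup.and hlow)).and (havoid _ (hSmeas r₀) hr₀null))
    refine ⟨(fun x => Φ (t' x) x) ⁻¹' G, hπfull G hGsec hG1, ?_⟩
    intro x hx
    set y := Φ (t' x) x with hydef
    have hyG : y ∈ G := hx
    have hySec : y ∈ Sec := hGsec hyG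
    obtain ⟨⟨hp1, hp2, hp3⟩, hp4⟩ := hGP y hyG
    obtain ⟨c', C', hc', hcC, hev⟩ := hBfacts y hp1 hp2 hp3
    have hBtop := hBtopgen y c' hc' (hev.mono fun n hn => hn.1)
    have hfg : ∀ᶠ r in 𝓝[>] (0:ℝ),
        Real.log (hitTime Φ x (S r)) / (-Real.log r)
          = Real.log ((hitTimeN F y (S r) : ℝ)) / (-Real.log r) := by
      have hIoo : Ioo (0:ℝ) r₀ ∈ 𝓝[>] (0:ℝ) := Ioo_mem_nhdsGT_of_mem ⟨le_refl 0, hr₀pos⟩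
      filter_upwards [hIoo] with r hr
      have hnone : ∀ k, F^[k] y ∉ S r := fun k hk => hp4 k (hSmono r r₀ hr.2.le hk)
      obtain ⟨h1, h2⟩ := hitTime_empty hflow hret0 hretmem hretmin hF (ht'0 x) hydef.symm
        hySec (ht'min x) (hSsec r) hBtop hnone
      rw [h1, h2]
      simp
    exact ⟨limsup_congr hfg, liminf_congr hfg⟩
  -- Case II : all targets have positive measure
  · push_neg at hzero
    set S₀ := ⋂ m : ℕ, S (1/((m:ℝ)+1)) with hS₀def
    have hS₀m : MeasurableSet S₀ := MeasurableSet.iInter fun m => hSmeas _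
    have hS₀null : μF S₀ = 0 := by
      have hseq : Tendsto (fun m : ℕ => μF (S (1/((m:ℝ)+1)))) atTop (𝓝 0) := by
        apply hS0.comp
        refine tendsto_nhdsWithin_of_tendsto_nhds_of_eventually_within _
          tendsto_one_div_add_atTop_nhds_zero_nat
          (Eventually.of_forall fun m => ?_)
        show (0:ℝ) < 1/((m:ℝ)+1)
        positivity
      have hle : ∀ m : ℕ, μF S₀ ≤ μF (S (1/((m:ℝ)+1))) :=
        fun m => measure_mono (iInter_subset _ m)
      have h2 := ge_of_tendsto' hseq hle
      exact le_antisymm h2 zero_le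
    have hhits : ∀ᵐ y ∂μF, ∀ m : ℕ, ∃ n, 1 ≤ n ∧ F^[n] y ∈ S (1/((m:ℝ)+1)) := by
      rw [ae_all_iff]
      intro m
      exact ae_hits hergF (hSmeas _) (hzero _ (by positivity))
    obtain ⟨G, hGsec, hG1, hGP⟩ :=
      key _ ((horb_eq.and (hup.and hlow)).and (hhits.and (havoid _ hS₀m hS₀null)))
    refine ⟨(fun x => Φ (t' x) x) ⁻¹' G, hπfull G hGsec hG1, ?_⟩
    intro x hx
    set y := Φ (t' x) x with hydef
    have hyG : y ∈ G := hx
    have hySec : y ∈ Sec := hGsec hyG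
    obtain ⟨⟨hp1, hp2, hp3⟩, hp5, hp6⟩ := hGP y hyG
    obtain ⟨c', C', hc', hcC, hev⟩ := hBfacts y hp1 hp2 hp3
    have hC'0 : 0 < C' := lt_of_lt_of_le hc' hcC
    have hne : ∀ r : ℝ, 0 < r → ∃ n, 1 ≤ n ∧ F^[n] y ∈ S r := by
      intro r hr
      obtain ⟨m, hm⟩ := exists_nat_one_div_lt hr
      obtain ⟨n, hn1, hn2⟩ := hp5 m
      exact ⟨n, hn1, hSmono _ _ hm.le hn2⟩
    have hclaim : ∀ K : ℕ, ∃ rK : ℝ, 0 < rK ∧ ∀ k ≤ K, F^[k] y ∉ S rK := by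
      intro K
      induction K with
      | zero =>
          have h0 : y ∉ S₀ := by simpa using hp6 0
          simp only [hS₀def, mem_iInter, not_forall] at h0
          obtain ⟨m₀, hm₀⟩ := h0
          refine ⟨1/((m₀:ℝ)+1), by positivity, fun k hk => ?_⟩
          obtain rfl := Nat.le_zero.mp hk
          simpa using hm₀
      | succ K ih =>
          obtain ⟨rK, hrK, hK⟩ := ih
          have h0 : F^[K+1] y ∉ S₀ := hp6 (K+1)
          simp only [hS₀def, mem_iInter, not_forall] at h0
          obtain ⟨m', hm'⟩ := h0
          refine ⟨min rK (1/((m':ℝ)+1)), lt_min hrK (by positivity), fun k hk => ?_⟩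
          rcases Nat.lt_or_ge k (K+1) with h|h
          · exact fun hmem => hK k (by omega) (hSmono _ _ (min_le_left _ _) hmem)
          · have hkK : k = K+1 := by omega
            subst hkK
            exact fun hmem => hm' (hSmono _ _ (min_le_right _ _) hmem)
    have htendn : Tendsto (fun r => hitTimeN F y (S r)) (𝓝[>] (0:ℝ)) atTop := by
      rw [tendsto_atTop]
      intro K
      obtain ⟨rK, hrK, hK⟩ := hclaim K
      have hIoc : Ioc (0:ℝ) rK ∈ 𝓝[>] (0:ℝ) := Ioc_mem_nhdsGT_of_mem ⟨le_refl 0, hrK⟩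
      filter_upwards [hIoc] with r hr
      by_contra hcon
      push_neg at hcon
      have hmem := Nat.sInf_mem (hne r hr.1)
      exact hK _ (le_of_lt hcon) (hSmono _ _ hr.2 hmem.2)
    have hyev : ∀ᶠ r in 𝓝[>] (0:ℝ), y ∉ S r := by
      obtain ⟨r0', hr0', h0⟩ := hclaim 0
      have hIoc : Ioc (0:ℝ) r0' ∈ 𝓝[>] (0:ℝ) := Ioc_mem_nhdsGT_of_mem ⟨le_refl 0, hr0'⟩
      filter_upwards [hIoc] with r hr hmem
      exact h0 0 (le_refl 0) (hSmono _ _ hr.2 hmem)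
    rw [eventually_atTop] at hev
    obtain ⟨N₀, hN₀⟩ := hev
    set L := max |Real.log c'| |Real.log (t' x + C')| with hLdef
    have hL0 : 0 ≤ L := le_trans (abs_nonneg _) (le_max_left _ _)
    obtain ⟨Nc, hNc⟩ := exists_nat_gt (1 / c')
    have htC'pos : 0 < t' x + C' := by linarith [ht'0 x]
    have hlogdiff : ∀ n : ℕ, max (max N₀ Nc) 1 ≤ n →
        1 ≤ t' x + birkhoffSum F ret n y ∧ 1 ≤ (n:ℝ) ∧
        |Real.log (t' x + birkhoffSum F ret n y) - Real.log n| ≤ L := by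
      intro n hn
      have hnN₀ : N₀ ≤ n := le_trans (le_trans (le_max_left _ _) (le_max_left _ _)) hn
      have hn1 : 1 ≤ n := le_trans (le_max_right _ _) hn
      have hnc : Nc ≤ n := le_trans (le_trans (le_max_right _ _) (le_max_left _ _)) hn
      obtain ⟨hlo, hhi⟩ := hN₀ n hnN₀
      have hn1R : (1:ℝ) ≤ n := by exact_mod_cast hn1
      have h1c : 1 ≤ c' * n := by
        have h2 : 1/c' < (n:ℝ) := lt_of_lt_of_le hNc (by exact_mod_cast hnc)
        rw [div_lt_iff₀ hc'] at h2
        nlinarith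
      have htB1 : 1 ≤ t' x + birkhoffSum F ret n y := by linarith [ht'0 x]
      refine ⟨htB1, hn1R, ?_⟩
      have hmulge : t' x ≤ t' x * n := le_mul_of_one_le_right (ht'0 x) hn1R
      have hub : t' x + birkhoffSum F ret n y ≤ (t' x + C') * n := by nlinarith
      have hlb : c' * n ≤ t' x + birkhoffSum F ret n y := by linarith [ht'0 x]
      have hcn0 : 0 < c' * n := by positivity
      have hlog1 : Real.log (c' * n) ≤ Real.log (t' x + birkhoffSum F ret n y) :=
        (Real.log_le_log_iff hcn0 (by linarith)).mpr hlb
      have hlog2 : Real.log (t' x + birkhoffSum F ret n y) ≤ Real.log ((t' x + C') * n) :=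
        (Real.log_le_log_iff (by linarith) (by positivity)).mpr hub
      rw [Real.log_mul (ne_of_gt hc') (by positivity)] at hlog1
      rw [Real.log_mul (ne_of_gt htC'pos) (by positivity)] at hlog2
      rw [abs_le]
      constructor
      · have ha := neg_abs_le (Real.log c')
        have hb := le_max_left |Real.log c'| |Real.log (t' x + C')|
        linarith
      · have ha := le_abs_self (Real.log (t' x + C'))
        have hb := le_max_right |Real.log c'| |Real.log (t' x + C')|
        linarith
    refine aux_limsup_liminf_eq ?_
    intro ε hε
    have h1 : ∀ᶠ r in 𝓝[>] (0:ℝ), max (max N₀ Nc) 1 ≤ hitTimeN F y (S r) :=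
      htendn.eventually (eventually_ge_atTop _)
    have h2 : Ioo (0:ℝ) (Real.exp (-((L+1)/ε))) ∈ 𝓝[>] (0:ℝ) :=
      Ioo_mem_nhdsGT_of_mem ⟨le_refl 0, Real.exp_pos _⟩
    filter_upwards [h1, h2, hyev] with r hr1 hr2 hr3
    have hr0 : 0 < r := hr2.1
    have hlogr : Real.log r < -((L+1)/ε) := by
      have h3 := Real.log_lt_log hr0 hr2.2
      rwa [Real.log_exp] at h3
    have hpos : 0 < -Real.log r := by
      have h4 : 0 < (L+1)/ε := by positivity
      linarith
    have hτ := hitTime_eq_birkhoff hflow hret0 hretmem hretmin hF (ht'0 x) hydef.symm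
      hySec (ht'min x) (hSsec r) hr3 (hne r hr0)
    obtain ⟨hB1, hn1R, hdiff⟩ := hlogdiff (hitTimeN F y (S r)) hr1
    have hf0 : 0 ≤ Real.log (hitTime Φ x (S r)) := by
      rw [hτ]; exact Real.log_nonneg hB1
    have hg0 : 0 ≤ Real.log ((hitTimeN F y (S r) : ℝ)) := Real.log_nonneg hn1R
    have hdiv : |Real.log (hitTime Φ x (S r)) - Real.log ((hitTimeN F y (S r) : ℝ))| ≤ L := by
      rw [hτ]; exact hdiff
    have hdd : |Real.log (hitTime Φ x (S r)) / (-Real.log r)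
        - Real.log ((hitTimeN F y (S r) : ℝ)) / (-Real.log r)| ≤ ε := by
      rw [div_sub_div_same, abs_div, abs_of_pos hpos, div_le_iff₀ hpos]
      calc |Real.log (hitTime Φ x (S r)) - Real.log ((hitTimeN F y (S r) : ℝ))|
          ≤ L := hdiv
        _ ≤ ε * ((L+1)/ε) := by
            rw [mul_div_cancel₀ _ (ne_of_gt hε)]
            linarith
        _ ≤ ε * (-Real.log r) := by
            apply mul_le_mul_of_nonneg_left _ hε.le
            linarith
    have habs := abs_le.mp hdd
    refine ⟨div_nonneg hf0 hpos.le, div_nonneg hg0 hpos.le, ?_, ?_⟩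
    · linarith [habs.2]
    · linarith [habs.1]
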